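/- (Weight-invariant property, two-task case) Let X₀ ∈ ℝ^{N₀×d}, Y₀ ∈ ℝ^{N₀×m}, X₁ ∈ ℝ^{N₁×d}, Y₁ ∈ ℝ^{N₁×m}, γ > 0. Define R₀ = (X₀ᵀX₀ + γI)⁻¹, W₀ = R₀X₀ᵀY₀, R₁ = R₀ − R₀X₁ᵀ(I + X₁R₀X₁ᵀ)⁻¹X₁R₀, and W₁ = W₀ − R₁X₁ᵀX₁W₀ + R₁X₁ᵀY₁. Then W₁ = (X₀ᵀX₀ + X₁ᵀX₁ + γI)⁻¹(X₀ᵀY₀ + X₁ᵀY₁), i.e., W₁ equals the joint ridge regression solution on the concatenated data. -/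
import Mathlib


open Matrix

/-- weight-invariant property, two-task case. -/
theorem weight_invariant_two_task (N₀ N₁ d m : ℕ)
    (X₀ : Matrix (Fin N₀) (Fin d) ℝ) (Y₀ : Matrix (Fin N₀) (Fin m) ℝ)
    (X₁ : Matrix (Fin N₁) (Fin d) ℝ) (Y₁ : Matrix (Fin N₁) (Fin m) ℝ)
    (γ : ℝ) (hγ : 0 < γ)
    (R₀ R₁ : Matrix (Fin d) (Fin d) ℝ) (W₀ W₁ : Matrix (Fin d) (Fin m) ℝ)
    (hR₀ : R₀ = (X₀ᵀ * X₀ + γ • (1 : Matrix (Fin d) (Fin d) ℝ))⁻¹)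
    (hW₀ : W₀ = R₀ * X₀ᵀ * Y₀)
    (hR₁ : R₁ = R₀ - R₀ * X₁ᵀ * ((1 : Matrix (Fin N₁) (Fin N₁) ℝ) + X₁ * R₀ * X₁ᵀ)⁻¹ * X₁ * R₀)
    (hW₁ : W₁ = W₀ - R₁ * X₁ᵀ * X₁ * W₀ + R₁ * X₁ᵀ * Y₁) :
    W₁ = (X₀ᵀ * X₀ + X₁ᵀ * X₁ + γ • (1 : Matrix (Fin d) (Fin d) ℝ))⁻¹ *
      (X₀ᵀ * Y₀ + X₁ᵀ * Y₁) := by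
  set A : Matrix (Fin d) (Fin d) ℝ := X₀ᵀ * X₀ + γ • (1 : Matrix (Fin d) (Fin d) ℝ) with hA
  set B : Matrix (Fin d) (Fin d) ℝ :=
    X₀ᵀ * X₀ + X₁ᵀ * X₁ + γ • (1 : Matrix (Fin d) (Fin d) ℝ) with hB
  set C : Matrix (Fin N₁) (Fin N₁) ℝ :=
    (1 : Matrix (Fin N₁) (Fin N₁) ℝ) + X₁ * R₀ * X₁ᵀ with hC
  -- positive definiteness
  have hsm : ((γ • (1 : Matrix (Fin d) (Fin d) ℝ))).PosDef := by
    have : (γ • (1 : Matrix (Fin d) (Fin d) ℝ)) = Matrix.diagonal (fun _ => γ) := by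
      rw [smul_one_eq_diagonal]
    rw [this]
    exact Matrix.posDef_diagonal_iff.mpr fun _ => hγ
  have hX₀ : (X₀ᵀ * X₀).PosSemidef := by
    simpa using Matrix.posSemidef_conjTranspose_mul_self X₀
  have hX₁ : (X₁ᵀ * X₁).PosSemidef := by
    simpa using Matrix.posSemidef_conjTranspose_mul_self X₁
  have hApd : A.PosDef := Matrix.PosDef.posSemidef_add hX₀ hsm
  have hBpd : B.PosDef := by
    have : B = X₀ᵀ * X₀ + (X₁ᵀ * X₁ + γ • (1 : Matrix (Fin d) (Fin d) ℝ)) := by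
      rw [hB, add_assoc]
    rw [this]
    exact Matrix.PosDef.posSemidef_add hX₀ (Matrix.PosDef.posSemidef_add hX₁ hsm)
  have hR₀pd : R₀.PosDef := hR₀ ▸ hApd.inv
  have hCpd : C.PosDef := by
    have h2 : (X₁ * R₀ * X₁ᵀ).PosSemidef := by
      have := hR₀pd.posSemidef.mul_mul_conjTranspose_same X₁
      simpa using this
    exact Matrix.PosDef.add_posSemidef Matrix.PosDef.one h2
  have hR₀A : R₀ * A = 1 := by
    rw [hR₀]; exact Matrix.nonsing_inv_mul A hApd.det_pos.ne'.isUnit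
  have hAR₀ : A * R₀ = 1 := by
    rw [hR₀]; exact Matrix.mul_nonsing_inv A hApd.det_pos.ne'.isUnit
  have hCC : C⁻¹ * C = 1 := Matrix.nonsing_inv_mul C hCpd.det_pos.ne'.isUnit
  -- key: R₁ * B = 1
  have hR₁B : R₁ * B = 1 := by
    have hR₀B : R₀ * B = 1 + R₀ * (X₁ᵀ * X₁) := by
      have : R₀ * B = R₀ * A + R₀ * (X₁ᵀ * X₁) := by
        rw [hA, hB, add_right_comm, Matrix.mul_add]
      rw [this, hR₀A]
    have hX₁R₀B : X₁ * (R₀ * B) = C * X₁ := by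
      rw [hR₀B, hC]
      simp only [Matrix.mul_add, Matrix.add_mul, Matrix.mul_one, Matrix.one_mul,
        Matrix.mul_assoc]
    calc R₁ * B = R₀ * B - R₀ * X₁ᵀ * C⁻¹ * (X₁ * (R₀ * B)) := by
          rw [hR₁]
          simp only [Matrix.sub_mul, Matrix.mul_assoc]
      _ = R₀ * B - R₀ * X₁ᵀ * (C⁻¹ * C) * X₁ := by
          rw [hX₁R₀B]
          simp only [Matrix.mul_assoc]
      _ = 1 + R₀ * (X₁ᵀ * X₁) - R₀ * X₁ᵀ * X₁ := by rw [hCC, hR₀B, Matrix.mul_one]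
      _ = 1 := by rw [Matrix.mul_assoc]; abel
  have hR₁_inv : R₁ = B⁻¹ := (Matrix.inv_eq_left_inv hR₁B).symm
  -- R₁ = (1 - R₁ X₁ᵀ X₁) R₀
  have hkey : R₁ = R₀ - R₁ * X₁ᵀ * X₁ * R₀ := by
    have hR₁A : R₁ * A = 1 - R₁ * (X₁ᵀ * X₁) := by
      have h1 : R₁ * B = R₁ * A + R₁ * (X₁ᵀ * X₁) := by
        rw [hA, hB, add_right_comm, Matrix.mul_add]
      rw [h1] at hR₁B
      linear_combination (norm := abel) hR₁B
    calc R₁ = R₁ * (A * R₀) := by rw [hAR₀, Matrix.mul_one]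
      _ = (R₁ * A) * R₀ := by rw [Matrix.mul_assoc]
      _ = (1 - R₁ * (X₁ᵀ * X₁)) * R₀ := by rw [hR₁A]
      _ = R₀ - R₁ * X₁ᵀ * X₁ * R₀ := by
          simp only [Matrix.sub_mul, Matrix.one_mul, Matrix.mul_assoc]
  rw [← hR₁_inv]
  calc W₁ = W₀ - R₁ * X₁ᵀ * X₁ * W₀ + R₁ * X₁ᵀ * Y₁ := hW₁
    _ = (R₀ - R₁ * X₁ᵀ * X₁ * R₀) * (X₀ᵀ * Y₀) + R₁ * (X₁ᵀ * Y₁) := by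
        rw [hW₀]
        simp only [Matrix.sub_mul, Matrix.mul_assoc]
    _ = R₁ * (X₀ᵀ * Y₀ + X₁ᵀ * Y₁) := by rw [← hkey, Matrix.mul_add]
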